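/- arXiv:2001.01725 — 3 statements merged into one kernel-verified Lean document; each statement's English description precedes it below -/
import Mathlib

section
/- Let h, m, T, k be positive rational numbers such that for every prime p the p-adic norm of 2kT is at most 1 (i.e., 2kT is a p-adic integer at every finite place). Then there exists a positive integer n such that the product over all primes p of the inverses of the p-adic norms of h²k²/(2m) equals n²h²/(8mT²); that is, ∏_p |h²k²/(2m)|_p^{-1} = n²h²/(8mT²). (The product has only finitely many factors different from 1, so it may be taken as a finite product over primes.) -/
open scoped BigOperators

lemma padicNorm_inv_nat_eq (p n : ℕ) (pp : p.Prime) (hn : n ≠ 0) :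
    (padicNorm p (n : ℚ))⁻¹ = ((p ^ n.factorization p : ℕ) : ℚ) := by
  haveI : Fact p.Prime := ⟨pp⟩
  rw [padicNorm.eq_zpow_of_nonzero (by exact_mod_cast hn),
    ← padicValRat_of_nat, zpow_neg, inv_inv, zpow_natCast,
    Nat.factorization_def n pp]
  push_cast
  ring

lemma prod_padicNorm_inv_nat (F : Finset ℕ) (hF : ∀ p ∈ F, p.Prime) (n : ℕ) (hn : n ≠ 0)
    (hsub : n.primeFactors ⊆ F) :
    ∏ p ∈ F, (padicNorm p (n : ℚ))⁻¹ = (n : ℚ) := by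
  rw [Finset.prod_congr rfl (fun p hp => padicNorm_inv_nat_eq p n (hF p hp) hn),
    ← Nat.cast_prod]
  congr 1
  rw [← Finset.prod_subset hsub (fun p _ hp => by
    rw [Finsupp.notMem_support_iff.mp (by rwa [Nat.support_factorization]), pow_zero])]
  conv_rhs => rw [← Nat.factorization_prod_pow_eq_self hn]
  rfl

lemma finprod_padicNorm_inv (q : ℚ) (hq : 0 < q) :
    (∏ᶠ p ∈ {p : ℕ | p.Prime}, (padicNorm p q)⁻¹) = q := by
  have hq0 : q ≠ 0 := hq.ne'
  have hnum : q.num.natAbs ≠ 0 := by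
    simpa [Int.natAbs_eq_zero] using Rat.num_ne_zero.mpr hq0
  have hden : q.den ≠ 0 := q.den_nz
  set F : Finset ℕ := (q.num.natAbs * q.den).primeFactors with hFdef
  have hFprime : ∀ p ∈ F, p.Prime := fun p hp => Nat.prime_of_mem_primeFactors hp
  have hqeq : ((q.num.natAbs : ℚ)) / ((q.den : ℚ)) = q := by
    rw [show ((q.num.natAbs : ℚ)) = ((q.num.natAbs : ℤ) : ℚ) from (Int.cast_natCast _).symm,
      Int.natAbs_of_nonneg (Rat.num_nonneg.mpr hq.le), Rat.num_div_den]
  have hfactor : ∀ p : ℕ, p.Prime →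
      (padicNorm p q)⁻¹ = (padicNorm p (q.num.natAbs : ℚ))⁻¹ / (padicNorm p (q.den : ℚ))⁻¹ := by
    intro p pp
    haveI : Fact p.Prime := ⟨pp⟩
    have ha : padicNorm p (q.num.natAbs : ℚ) ≠ 0 :=
      padicNorm.nonzero (by exact_mod_cast hnum)
    have hb : padicNorm p (q.den : ℚ) ≠ 0 :=
      padicNorm.nonzero (by exact_mod_cast hden)
    have hd : padicNorm p q = padicNorm p (q.num.natAbs : ℚ) / padicNorm p (q.den : ℚ) := by
      conv_lhs => rw [← hqeq]
      exact padicNorm.div _ _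
    rw [hd, inv_div]
    field_simp
  have hsupp : {p : ℕ | p.Prime} ∩ Function.mulSupport (fun p => (padicNorm p q)⁻¹) ⊆ ↑F := by
    rintro p ⟨pp, hp⟩
    haveI : Fact p.Prime := ⟨pp⟩
    simp only [Finset.coe_insert, Finset.mem_coe, hFdef, Nat.mem_primeFactors]
    refine ⟨pp, ?_, mul_ne_zero hnum hden⟩
    by_contra hdvd
    have h1 : padicNorm p (q.num.natAbs : ℚ) = 1 :=
      (padicNorm.nat_eq_one_iff (p := p) _).mpr fun hd => hdvd (hd.mul_right _)
    have h2 : padicNorm p (q.den : ℚ) = 1 :=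
      (padicNorm.nat_eq_one_iff (p := p) _).mpr fun hd => hdvd (hd.mul_left _)
    exact Function.mem_mulSupport.mp hp (by rw [hfactor p pp, h1, h2]; norm_num)
  have hfin : ({p : ℕ | p.Prime} ∩
      Function.mulSupport (fun p => (padicNorm p q)⁻¹)).Finite :=
    F.finite_toSet.subset hsupp
  rw [finprod_mem_eq_prod _ hfin]
  have hsubF : hfin.toFinset ⊆ F := fun p hp =>
    hsupp (hfin.mem_toFinset.mp hp)
  rw [Finset.prod_subset hsubF (fun p hpF hpn => by
    by_contra hne
    exact hpn (hfin.mem_toFinset.mpr ⟨hFprime p hpF, hne⟩))]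
  rw [Finset.prod_congr rfl (fun p hp => hfactor p (hFprime p hp)), Finset.prod_div_distrib,
    prod_padicNorm_inv_nat F hFprime _ hnum (by
      rw [hFdef, Nat.primeFactors_mul hnum hden]; exact Finset.subset_union_left),
    prod_padicNorm_inv_nat F hFprime _ hden (by
      rw [hFdef, Nat.primeFactors_mul hnum hden]; exact Finset.subset_union_right),
    hqeq]

lemma exists_nat_of_padicNorm_le_one (q : ℚ) (hq : 0 < q)
    (hint : ∀ p : ℕ, p.Prime → padicNorm p q ≤ 1) : ∃ n : ℕ, 0 < n ∧ (n : ℚ) = q := by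
  have hden : q.den = 1 := by
    by_contra hd
    set p := q.den.minFac with hp
    have pp : p.Prime := Nat.minFac_prime hd
    haveI : Fact p.Prime := ⟨pp⟩
    have hpd : p ∣ q.den := Nat.minFac_dvd _
    have hpn : ¬ (p : ℤ) ∣ q.num := by
      intro hdvd
      have h' : p ∣ q.num.natAbs := by
        have := Int.natAbs_dvd_natAbs.mpr hdvd
        simpa using this
      have hcop : Nat.Coprime p q.den := Nat.Coprime.coprime_dvd_left h' q.reduced
      exact pp.one_lt.ne' (Nat.Coprime.eq_one_of_dvd hcop hpd)
    have h1 : padicNorm p (q.num : ℚ) = 1 := (padicNorm.int_eq_one_iff _).mpr hpn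
    have h2 : padicNorm p (q.den : ℚ) < 1 := (padicNorm.nat_lt_one_iff _).mpr hpd
    have h2' : 0 < padicNorm p (q.den : ℚ) :=
      lt_of_le_of_ne (padicNorm.nonneg _)
        (Ne.symm (padicNorm.nonzero (by exact_mod_cast q.den_nz)))
    have : padicNorm p q = 1 / padicNorm p (q.den : ℚ) := by
      conv_lhs => rw [← q.num_div_den]
      rw [padicNorm.div, h1]
    have hgt : 1 < padicNorm p q := by
      rw [this]
      exact (one_lt_div h2').mpr h2
    exact absurd (hint p pp) (not_le.mpr hgt)
  refine ⟨q.num.toNat, ?_, ?_⟩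
  · have : 0 < q.num := Rat.num_pos.mpr hq
    omega
  · have : (q.num.toNat : ℤ) = q.num := Int.toNat_of_nonneg (Rat.num_pos.mpr hq).le
    rw [show ((q.num.toNat : ℚ)) = ((q.num.toNat : ℤ) : ℚ) by push_cast; ring, this]
    conv_rhs => rw [← q.num_div_den, hden]
    simp

/-- **Product formula for the particle-in-a-box spectrum.**
If `h, m, T, k` are positive rationals such that `2kT` is a `p`-adic integer at every
finite place (`|2kT|_p ≤ 1` for every prime `p`), then the Euler product over all primes
of the inverses of the `p`-adic energies `E_p = |h²k²/(2m)|_p` recovers the Archimedean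
spectrum: `∏_p |h²k²/(2m)|_p⁻¹ = n²h²/(8mT²)` for some positive integer `n`. -/
theorem padic_box_spectrum_euler_product
    (h m T k : ℚ) (hh : 0 < h) (hm : 0 < m) (hT : 0 < T) (hk : 0 < k)
    (hint : ∀ p : ℕ, p.Prime → padicNorm p (2 * k * T) ≤ 1) :
    ∃ n : ℕ, 0 < n ∧
      (∏ᶠ p ∈ {p : ℕ | p.Prime}, (padicNorm p (h ^ 2 * k ^ 2 / (2 * m)))⁻¹)
        = (n : ℚ) ^ 2 * h ^ 2 / (8 * m * T ^ 2) := by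
  obtain ⟨n, hn, hneq⟩ := exists_nat_of_padicNorm_le_one (2 * k * T)
    (by positivity) hint
  refine ⟨n, hn, ?_⟩
  rw [finprod_padicNorm_inv _ (by positivity), hneq]
  field_simp
  ring
end

section
/- Fix a prime p and let μ be an additive Haar measure on ℚ_p normalized so that μ({x ∈ ℚ_p : ‖x‖_p ≤ 1}) = 1. Then for every real number s > 0, the integral of ‖x‖_p^{s−1} over the unit ball {x : ‖x‖_p ≤ 1} with respect to μ equals (1 − p⁻¹)/(1 − p^{−s}). -/
open MeasureTheory
open scoped Pointwise

namespace PadicZetaAux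

variable (p : ℕ) [Fact p.Prime]

/-- The ball of radius `p^{-n}` in `ℚ_p`. -/
def B (n : ℕ) : Set ℚ_[p] := {x | ‖x‖ ≤ (p : ℝ) ^ (-(n : ℤ))}

lemma one_lt_p : 1 < (p : ℝ) := by exact_mod_cast (Fact.out : p.Prime).one_lt

lemma p_pos : (0 : ℝ) < p := lt_trans one_pos (one_lt_p p)

lemma mem_B {n : ℕ} {x : ℚ_[p]} : x ∈ B p n ↔ ‖x‖ ≤ (p : ℝ) ^ (-(n : ℤ)) := Iff.rfl

lemma isClosed_B (n : ℕ) : IsClosed (B p n) := isClosed_le continuous_norm continuous_const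

lemma B_succ_subset (n : ℕ) : B p (n + 1) ⊆ B p n := fun x hx =>
  le_trans hx ((zpow_le_zpow_iff_right₀ (one_lt_p p)).2 (by omega))

lemma B_antitone : Antitone (B p) := antitone_nat_of_succ_le (B_succ_subset p)

/-- Coset representatives. -/
noncomputable def c (n : ℕ) (j : Fin p) : ℚ_[p] := ((j : ℕ) : ℚ_[p]) * (p : ℚ_[p]) ^ n

lemma mem_coset_iff {n : ℕ} {j : Fin p} {x : ℚ_[p]} :
    x ∈ c p n j +ᵥ B p (n + 1) ↔ ‖x - c p n j‖ ≤ (p : ℝ) ^ (-((n : ℤ) + 1)) := by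
  rw [Set.mem_vadd_set_iff_neg_vadd_mem, vadd_eq_add, neg_add_eq_sub]
  simp [mem_B]

lemma norm_c_le (n : ℕ) (j : Fin p) : ‖c p n j‖ ≤ (p : ℝ) ^ (-(n : ℤ)) := by
  rw [c, norm_mul, Padic.norm_p_pow]
  have h1 : ‖((j : ℕ) : ℚ_[p])‖ ≤ 1 := by
    have := Padic.norm_int_le_one (p := p) ((j : ℕ) : ℤ)
    push_cast at this ⊢
    exact this
  calc ‖((j : ℕ) : ℚ_[p])‖ * (p : ℝ) ^ (-(n : ℤ))
      ≤ 1 * (p : ℝ) ^ (-(n : ℤ)) := by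
        apply mul_le_mul_of_nonneg_right h1 (le_of_lt (zpow_pos (p_pos p) _))
    _ = (p : ℝ) ^ (-(n : ℤ)) := one_mul _

lemma B_eq_iUnion (n : ℕ) :
    B p n = ⋃ j : Fin p, (c p n j +ᵥ B p (n + 1)) := by
  ext x
  simp only [Set.mem_iUnion, mem_coset_iff, mem_B]
  constructor
  · intro hx
    have hpn : ‖((p : ℚ_[p]) ^ n)‖ = (p : ℝ) ^ (-(n : ℤ)) := Padic.norm_p_pow n
    have hp0 : ((p : ℚ_[p]) ^ n) ≠ 0 :=
      pow_ne_zero _ (by exact_mod_cast (Fact.out : p.Prime).ne_zero)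
    have hppos : (0 : ℝ) < (p : ℝ) ^ (-(n : ℤ)) := zpow_pos (p_pos p) _
    set w : ℚ_[p] := x * ((p : ℚ_[p]) ^ n)⁻¹ with hw
    have hwnorm : ‖w‖ ≤ 1 := by
      rw [hw, norm_mul, norm_inv, hpn]
      calc ‖x‖ * ((p : ℝ) ^ (-(n : ℤ)))⁻¹
          ≤ (p : ℝ) ^ (-(n : ℤ)) * ((p : ℝ) ^ (-(n : ℤ)))⁻¹ :=
            mul_le_mul_of_nonneg_right hx (inv_nonneg.2 hppos.le)
        _ = 1 := mul_inv_cancel₀ (ne_of_gt hppos)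
    set z : ℤ_[p] := ⟨w, hwnorm⟩ with hz
    refine ⟨⟨z.zmodRepr, PadicInt.zmodRepr_lt_p z⟩, ?_⟩
    have hsub : ‖(z - (z.zmodRepr : ℤ_[p]) : ℤ_[p])‖ < 1 := by
      rw [PadicInt.norm_lt_one_iff_dvd]
      rw [← Ideal.mem_span_singleton, ← PadicInt.maximalIdeal_eq_span_p]
      exact PadicInt.sub_zmodRepr_mem z
    have hsubQ : ‖w - (z.zmodRepr : ℚ_[p])‖ ≤ (p : ℝ)⁻¹ := by
      have h1 : ((z - (z.zmodRepr : ℤ_[p]) : ℤ_[p]) : ℚ_[p]) = w - (z.zmodRepr : ℚ_[p]) := by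
        push_cast [hz]
        rfl
      rw [PadicInt.norm_def, h1] at hsub
      have := (Padic.norm_le_pow_iff_norm_lt_pow_add_one (w - (z.zmodRepr : ℚ_[p])) (-1)).2
      simp only [neg_add_cancel, zpow_zero, zpow_neg_one] at this
      exact this hsub
    have hxw : x = w * (p : ℚ_[p]) ^ n := by
      rw [hw, mul_assoc, inv_mul_cancel₀ hp0, mul_one]
    have : x - c p n (⟨z.zmodRepr, PadicInt.zmodRepr_lt_p z⟩ : Fin p)
        = (w - (z.zmodRepr : ℚ_[p])) * (p : ℚ_[p]) ^ n := by
      rw [c, hxw]; ring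
    rw [this, norm_mul, hpn]
    calc ‖w - (z.zmodRepr : ℚ_[p])‖ * (p : ℝ) ^ (-(n : ℤ))
        ≤ (p : ℝ)⁻¹ * (p : ℝ) ^ (-(n : ℤ)) :=
          mul_le_mul_of_nonneg_right hsubQ hppos.le
      _ = (p : ℝ) ^ (-((n : ℤ) + 1)) := by
          rw [← zpow_neg_one, ← zpow_add₀ (ne_of_gt (p_pos p))]
          ring_nf
  · rintro ⟨j, hj⟩
    have : x = (x - c p n j) + c p n j := by ring
    rw [this]
    refine le_trans (Padic.nonarchimedean _ _) (max_le ?_ (norm_c_le p n j))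
    refine le_trans hj ?_
    exact (zpow_le_zpow_iff_right₀ (one_lt_p p)).2 (by omega)

set_option maxHeartbeats 2000000 in
lemma pairwise_disjoint_cosets (n : ℕ) :
    Pairwise (Function.onFun Disjoint fun j : Fin p => c p n j +ᵥ B p (n + 1)) := by
  intro i j hij
  refine Set.disjoint_left.2 fun x hxi hxj => ?_
  rw [mem_coset_iff] at hxi hxj
  have hd : ‖c p n i - c p n j‖ ≤ (p : ℝ) ^ (-((n : ℤ) + 1)) := by
    have h1 : c p n i - c p n j = (x - c p n j) + (c p n i - x) := by ring
    rw [h1]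
    refine le_trans (Padic.nonarchimedean _ _) (max_le hxj ?_)
    rwa [norm_sub_rev]
  set m : ℤ := ((i : ℕ) : ℤ) - ((j : ℕ) : ℤ) with hm
  have hMone : ‖((m : ℤ) : ℚ_[p])‖ = 1 := by
    refine le_antisymm (Padic.norm_int_le_one _) (not_lt.1 fun h => ?_)
    have hdvd := Padic.norm_intCast_lt_one_iff.1 h
    have hm0 : m = 0 := by
      refine Int.eq_zero_of_dvd_of_natAbs_lt_natAbs hdvd ?_
      have hi := i.isLt; have hj' := j.isLt
      omega
    have : (i : ℕ) = (j : ℕ) := by omega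
    exact hij (Fin.ext this)
  have heq : ‖c p n i - c p n j‖ = (p : ℝ) ^ (-(n : ℤ)) := by
    have h2 : c p n i - c p n j = ((m : ℤ) : ℚ_[p]) * (p : ℚ_[p]) ^ n := by
      rw [c, c, hm]; push_cast; ring
    rw [h2, norm_mul, hMone, Padic.norm_p_pow, one_mul]
  rw [heq] at hd
  have : ¬ ((p : ℝ) ^ (-(n : ℤ)) ≤ (p : ℝ) ^ (-((n : ℤ) + 1))) := by
    rw [zpow_le_zpow_iff_right₀ (one_lt_p p)]
    omega
  exact this hd

open scoped ENNReal

lemma measure_B [MeasurableSpace ℚ_[p]] [BorelSpace ℚ_[p]]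
    (μ : Measure ℚ_[p]) [μ.IsAddHaarMeasure]
    (hμ : μ (B p 0) = 1) (n : ℕ) :
    μ (B p n) = ((p : ℝ≥0∞))⁻¹ ^ n := by
  have hp0 : (p : ℝ≥0∞) ≠ 0 := by
    exact_mod_cast Nat.cast_ne_zero.2 (Fact.out : p.Prime).ne_zero
  have hpt : (p : ℝ≥0∞) ≠ ⊤ := ENNReal.natCast_ne_top p
  induction n with
  | zero => simpa using hμ
  | succ n ih =>
    have key : μ (B p n) = (p : ℝ≥0∞) * μ (B p (n + 1)) := by
      rw [B_eq_iUnion p n,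
        measure_iUnion (pairwise_disjoint_cosets p n)
          (fun j => ((isClosed_B p (n + 1)).measurableSet).const_vadd _)]
      simp only [measure_vadd]
      rw [tsum_fintype]
      simp [Finset.sum_const, nsmul_eq_mul]
    have : μ (B p (n + 1)) = ((p : ℝ≥0∞))⁻¹ * ((p : ℝ≥0∞))⁻¹ ^ n := by
      calc μ (B p (n + 1))
          = ((p : ℝ≥0∞))⁻¹ * ((p : ℝ≥0∞) * μ (B p (n + 1))) := by
            rw [← mul_assoc, ENNReal.inv_mul_cancel hp0 hpt, one_mul]
        _ = ((p : ℝ≥0∞))⁻¹ * ((p : ℝ≥0∞))⁻¹ ^ n := by rw [← key, ih]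
    rw [this, pow_succ]
    ring

lemma norm_eq_of_mem_diff {n : ℕ} {x : ℚ_[p]} (hx : x ∈ B p n \ B p (n + 1)) :
    ‖x‖ = (p : ℝ) ^ (-(n : ℤ)) := by
  refine le_antisymm hx.1 ?_
  have h2 := hx.2
  rw [mem_B] at h2
  have : ¬ ‖x‖ < (p : ℝ) ^ (-(n : ℤ)) := fun h => by
    apply h2
    rw [Padic.norm_le_pow_iff_norm_lt_pow_add_one]
    have : (-((n : ℕ) + 1 : ℕ) : ℤ) + 1 = -(n : ℤ) := by push_cast; ring
    rw [this]
    exact h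
  exact not_lt.1 this

lemma exists_mem_diff {x : ℚ_[p]} (hx : x ∈ B p 0) (hx0 : x ≠ 0) :
    ∃ n : ℕ, x ∈ B p n \ B p (n + 1) := by
  have hval : ‖x‖ = (p : ℝ) ^ (-x.valuation) := Padic.norm_eq_zpow_neg_valuation hx0
  have hx1 : ‖x‖ ≤ 1 := by simpa [mem_B] using hx
  have hv0 : 0 ≤ x.valuation := by
    by_contra h
    push_neg at h
    have : (p : ℝ) ^ (0 : ℤ) < (p : ℝ) ^ (-x.valuation) :=
      (zpow_lt_zpow_iff_right₀ (one_lt_p p)).2 (by omega)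
    rw [zpow_zero] at this
    rw [hval] at hx1
    linarith
  refine ⟨x.valuation.toNat, ?_, ?_⟩
  · rw [mem_B, hval, Int.toNat_of_nonneg hv0]
  · rw [mem_B, hval, not_le]
    refine (zpow_lt_zpow_iff_right₀ (one_lt_p p)).2 ?_
    have := Int.toNat_of_nonneg hv0
    push_cast
    omega

end PadicZetaAux

open PadicZetaAux
open scoped ENNReal

/-- **The local zeta integral on `ℤ_p`.**
For an additive Haar measure `μ` on `ℚ_p` normalized by `μ(ℤ_p) = 1` and any real
`s > 0`, `∫_{‖x‖ ≤ 1} ‖x‖^{s-1} dμ = (1 − p⁻¹)/(1 − p^{−s})`. -/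
theorem padic_local_zeta_integral (p : ℕ) [Fact p.Prime]
    [MeasurableSpace ℚ_[p]] [BorelSpace ℚ_[p]]
    (μ : Measure ℚ_[p]) [μ.IsAddHaarMeasure]
    (hμ : μ {x : ℚ_[p] | ‖x‖ ≤ 1} = 1)
    (s : ℝ) (hs : 0 < s) :
    ∫ x in {x : ℚ_[p] | ‖x‖ ≤ 1}, ‖x‖ ^ (s - 1) ∂μ
      = (1 - (p : ℝ)⁻¹) / (1 - (p : ℝ) ^ (-s)) := by
  have hSB : {x : ℚ_[p] | ‖x‖ ≤ 1} = B p 0 := by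
    simp [B]
  have hμ0 : μ (B p 0) = 1 := by rwa [hSB] at hμ
  have hp1 : 1 < (p : ℝ) := one_lt_p p
  have hppos : (0 : ℝ) < p := p_pos p
  have hr1 : (p : ℝ)⁻¹ < 1 := inv_lt_one_of_one_lt₀ hp1
  have hr0 : (0 : ℝ) ≤ (p : ℝ)⁻¹ := by positivity
  set q : ℝ := (p : ℝ) ^ (-s) with hqdef
  have hq0 : 0 ≤ q := Real.rpow_nonneg hppos.le _
  have hq1 : q < 1 := Real.rpow_lt_one_of_one_lt_of_neg hp1 (by linarith)
  have hp0E : (p : ℝ≥0∞) ≠ 0 := by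
    exact_mod_cast Nat.cast_ne_zero.2 (Fact.out : p.Prime).ne_zero
  set A : ℕ → Set ℚ_[p] := fun n => B p n \ B p (n + 1) with hA
  have hAmeas : ∀ n, MeasurableSet (A n) := fun n =>
    ((isClosed_B p n).measurableSet).diff ((isClosed_B p (n + 1)).measurableSet)
  have hAdisj : Pairwise (Function.onFun Disjoint A) := by
    intro m n hmn
    rcases Nat.lt_or_ge m n with h | h
    · refine Set.disjoint_left.2 fun x hxm hxn => ?_
      exact hxm.2 (B_antitone p (show m + 1 ≤ n by omega) hxn.1)
    · have h' : n < m := by omega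
      refine Set.disjoint_right.2 fun x hxn hxm => ?_
      exact hxn.2 (B_antitone p (show n + 1 ≤ m by omega) hxm.1)
  have hμB := measure_B p μ hμ0
  have hμA : ∀ n, μ (A n) = ((p : ℝ≥0∞))⁻¹ ^ n - ((p : ℝ≥0∞))⁻¹ ^ (n + 1) := fun n => by
    rw [hA]
    rw [measure_diff (B_succ_subset p n)
      ((isClosed_B p (n + 1)).measurableSet.nullMeasurableSet)
      (by rw [hμB]; exact ENNReal.pow_ne_top (ENNReal.inv_ne_top.2 hp0E)), hμB, hμB]
  have hzero : μ {(0 : ℚ_[p])} = 0 := by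
    have hle : ∀ n, μ {(0 : ℚ_[p])} ≤ ((p : ℝ≥0∞))⁻¹ ^ n := fun n => by
      rw [← hμB n]
      refine measure_mono fun x hx => ?_
      simp only [Set.mem_singleton_iff] at hx
      rw [hx, mem_B, norm_zero]
      exact le_of_lt (zpow_pos hppos _)
    have htend : Filter.Tendsto (fun n : ℕ => ((p : ℝ≥0∞))⁻¹ ^ n) Filter.atTop (nhds 0) :=
      ENNReal.tendsto_pow_atTop_nhds_zero_of_lt_one
        (ENNReal.inv_lt_one.2 (by exact_mod_cast (Fact.out : p.Prime).one_lt))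
    exact le_antisymm (ge_of_tendsto' htend hle) zero_le
  have hae : (B p 0 : Set ℚ_[p]) =ᵐ[μ] ⋃ n, A n := by
    rw [MeasureTheory.ae_eq_set]
    constructor
    · refine measure_mono_null ?_ hzero
      intro x hx
      simp only [Set.mem_diff] at hx
      simp only [Set.mem_singleton_iff]
      by_contra h
      exact hx.2 (Set.mem_iUnion.2 (exists_mem_diff p hx.1 h))
    · have hempty : (⋃ n, A n) \ B p 0 = ∅ := by
        refine Set.diff_eq_empty.2 fun x hx => ?_
        rcases Set.mem_iUnion.1 hx with ⟨n, hn⟩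
        exact B_antitone p (Nat.zero_le n) hn.1
      rw [hempty]
      exact measure_empty
  rw [hSB]
  have hfmeas : AEStronglyMeasurable (fun x : ℚ_[p] => ‖x‖ ^ (s - 1)) (μ.restrict (B p 0)) :=
    (measurable_norm.pow_const (s - 1)).aestronglyMeasurable
  rw [MeasureTheory.integral_eq_lintegral_of_nonneg_ae
    (Filter.Eventually.of_forall fun x => Real.rpow_nonneg (norm_nonneg x) _) hfmeas]
  rw [setLIntegral_congr hae, lintegral_iUnion hAmeas hAdisj]
  have hterm : ∀ n : ℕ, ∫⁻ x in A n, ENNReal.ofReal (‖x‖ ^ (s - 1)) ∂μ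
      = ENNReal.ofReal ((1 - (p : ℝ)⁻¹) * q ^ n) := by
    intro n
    rw [setLIntegral_congr_fun_ae (hAmeas n)
      (Filter.Eventually.of_forall fun x hx => by rw [norm_eq_of_mem_diff p hx])]
    rw [setLIntegral_const, hμA n]
    have hq' : ∀ k : ℕ, ((p : ℝ≥0∞))⁻¹ ^ k = ENNReal.ofReal ((p : ℝ)⁻¹ ^ k) := fun k => by
      rw [ENNReal.ofReal_pow hr0, ENNReal.ofReal_inv_of_pos hppos, ENNReal.ofReal_natCast]
    have hE : ((p : ℝ≥0∞))⁻¹ ^ n - ((p : ℝ≥0∞))⁻¹ ^ (n + 1)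
        = ENNReal.ofReal ((p : ℝ)⁻¹ ^ n - (p : ℝ)⁻¹ ^ (n + 1)) := by
      rw [ENNReal.ofReal_sub _ (by positivity), hq' n, hq' (n + 1)]
    rw [hE, ← ENNReal.ofReal_mul (by positivity)]
    congr 1
    have ht : (0 : ℝ) < (p : ℝ)⁻¹ := by positivity
    have h1 : (p : ℝ) ^ (-(n : ℤ)) = ((p : ℝ)⁻¹) ^ n := by
      rw [zpow_neg, zpow_natCast, inv_pow]
    have h2 : (((p : ℝ)⁻¹ ^ n) ^ (s - 1)) * ((p : ℝ)⁻¹ ^ n) = ((p : ℝ)⁻¹ ^ n) ^ s := by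
      nth_rewrite 2 [← Real.rpow_one ((p : ℝ)⁻¹ ^ n)]
      rw [← Real.rpow_add (by positivity), sub_add_cancel]
    have h3 : ((p : ℝ)⁻¹ ^ n) ^ s = q ^ n := by
      rw [hqdef, ← Real.rpow_natCast ((p : ℝ)⁻¹) n, ← Real.rpow_mul ht.le, mul_comm,
        Real.rpow_mul ht.le, Real.rpow_natCast, Real.inv_rpow hppos.le,
        ← Real.rpow_neg hppos.le]
    calc ((p : ℝ) ^ (-(n : ℤ))) ^ (s - 1) * ((p : ℝ)⁻¹ ^ n - (p : ℝ)⁻¹ ^ (n + 1))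
        = (((p : ℝ)⁻¹ ^ n) ^ (s - 1) * ((p : ℝ)⁻¹ ^ n)) * (1 - (p : ℝ)⁻¹) := by
          rw [h1]; ring
      _ = ((p : ℝ)⁻¹ ^ n) ^ s * (1 - (p : ℝ)⁻¹) := by rw [h2]
      _ = (1 - (p : ℝ)⁻¹) * q ^ n := by rw [h3]; ring
  have hsummable : Summable fun n : ℕ => (1 - (p : ℝ)⁻¹) * q ^ n :=
    (summable_geometric_of_lt_one hq0 hq1).mul_left _
  have hsum : (∑' n : ℕ, ∫⁻ x in A n, ENNReal.ofReal (‖x‖ ^ (s - 1)) ∂μ)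
      = ENNReal.ofReal ((1 - (p : ℝ)⁻¹) * (1 - q)⁻¹) := by
    rw [tsum_congr hterm, ← ENNReal.ofReal_tsum_of_nonneg
      (fun n => mul_nonneg (by linarith) (pow_nonneg hq0 n)) hsummable, tsum_mul_left, tsum_geometric_of_lt_one hq0 hq1]
  rw [hsum, ENNReal.toReal_ofReal
    (mul_nonneg (by linarith) (inv_nonneg.2 (by linarith))), div_eq_mul_inv]
end

section
/- Fix a prime p and let μ be an additive Haar measure on ℚ_p normalized so that μ({x ∈ ℚ_p : ‖x‖_p ≤ 1}) = 1. Define Γ_p(s) = (1 − p^{s−1})/(1 − p^{−s}) for real s with p^{−s} ≠ 1. Then for all real numbers s₁, s₂ with 0 < s₁, 0 < s₂, and s₁ + s₂ < 1, the Beta integral over all of ℚ_p satisfies ∫_{ℚ_p} ‖x‖_p^{s₁−1} · ‖1 − x‖_p^{s₂−1} dμ(x) = Γ_p(s₁)Γ_p(s₂)/Γ_p(s₁ + s₂). -/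
open MeasureTheory

/-- The `p`-adic Gamma function `Γ_p(s) = (1 − p^{s−1})/(1 − p^{−s})` for the
multiplicative character `π_s(x) = |x|^s` with trivial sign. -/
noncomputable def padicGamma (p : ℕ) (s : ℝ) : ℝ :=
  (1 - (p : ℝ) ^ (s - 1)) / (1 - (p : ℝ) ^ (-s))

open Set
open scoped ENNReal

namespace PadicBetaAux

variable {p : ℕ} [hp : Fact p.Prime]

lemma one_lt_q : (1:ℝ) < p := by exact_mod_cast hp.out.one_lt
lemma q_pos : (0:ℝ) < p := lt_trans one_pos one_lt_q

/-- ball of radius p^n -/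
def B (p : ℕ) [Fact p.Prime] (n : ℤ) : Set ℚ_[p] := {x | ‖x‖ ≤ (p:ℝ)^n}

lemma B_closed (n : ℤ) : IsClosed (B p n) :=
  isClosed_le continuous_norm continuous_const

lemma B_eq_closedBall (n : ℤ) : B p n = Metric.closedBall (0:ℚ_[p]) ((p:ℝ)^n) := by
  ext x; simp [B, Metric.mem_closedBall, dist_zero_right]

lemma B_cover (n : ℤ) :
    B p n = ⋃ k ∈ Finset.range p,
      {x : ℚ_[p] | ‖x - (k:ℚ_[p]) * (p:ℚ_[p])^(-n)‖ ≤ (p:ℝ)^(n-1)} := by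
  ext x
  simp only [B, mem_setOf_eq, mem_iUnion, Finset.mem_range, exists_prop]
  constructor
  · intro hx
    have hy : ‖(p:ℚ_[p])^n * x‖ ≤ 1 := by
      rw [norm_mul, Padic.norm_p_zpow]
      calc (p:ℝ)^(-n) * ‖x‖ ≤ (p:ℝ)^(-n) * (p:ℝ)^n := by
            have := zpow_pos (q_pos (p := p)) (-n)
            nlinarith
        _ = 1 := by
            rw [← zpow_add₀ (ne_of_gt (q_pos (p := p))), neg_add_cancel, zpow_zero]
    set z : ℤ_[p] := ⟨(p:ℚ_[p])^n * x, hy⟩ with hz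
    refine ⟨z.zmodRepr, PadicInt.zmodRepr_lt_p z, ?_⟩
    have hmem := PadicInt.sub_zmodRepr_mem z
    rw [PadicInt.maximalIdeal_eq_span_p, Ideal.mem_span_singleton] at hmem
    have hlt : ‖z - (z.zmodRepr : ℤ_[p])‖ < 1 := (PadicInt.norm_lt_one_iff_dvd _).2 hmem
    have hle : ‖z - (z.zmodRepr : ℤ_[p])‖ ≤ (p:ℝ)^(-1:ℤ) := by
      have := (PadicInt.norm_lt_pow_iff_norm_le_pow_sub_one (z - (z.zmodRepr : ℤ_[p])) 0)
      simp only [zpow_zero, zero_sub] at this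
      exact this.1 hlt
    have hpne : (p:ℚ_[p]) ≠ 0 := Nat.cast_ne_zero.2 hp.out.ne_zero
    have hcoe : ((z - (z.zmodRepr : ℤ_[p]) : ℤ_[p]) : ℚ_[p])
        = (p:ℚ_[p])^n * x - (z.zmodRepr : ℚ_[p]) := by
      push_cast [hz]
      rfl
    have hpp : (p:ℚ_[p])^(-n) * (p:ℚ_[p])^n = 1 := by
      rw [← zpow_add₀ hpne, neg_add_cancel, zpow_zero]
    have key : x - (z.zmodRepr : ℚ_[p]) * (p:ℚ_[p])^(-n)
        = (p:ℚ_[p])^(-n) * ((z - (z.zmodRepr : ℤ_[p]) : ℤ_[p]) : ℚ_[p]) := by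
      rw [hcoe]
      linear_combination (-x) * hpp
    rw [key, norm_mul, Padic.norm_p_zpow, neg_neg]
    calc (p:ℝ)^n * ‖((z - (z.zmodRepr : ℤ_[p]) : ℤ_[p]) : ℚ_[p])‖
        ≤ (p:ℝ)^n * (p:ℝ)^(-1:ℤ) :=
          mul_le_mul_of_nonneg_left hle (zpow_pos (q_pos (p := p)) n).le
      _ = (p:ℝ)^(n-1) := by rw [← zpow_add₀ (ne_of_gt q_pos)]; ring_nf
  · rintro ⟨k, -, hk⟩
    have h1 : ‖(k:ℚ_[p]) * (p:ℚ_[p])^(-n)‖ ≤ (p:ℝ)^n := by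
      rw [norm_mul, Padic.norm_p_zpow, neg_neg]
      calc ‖(k:ℚ_[p])‖ * (p:ℝ)^n ≤ 1 * (p:ℝ)^n := by
            have h2 : ‖(k:ℚ_[p])‖ ≤ 1 := by
              exact_mod_cast Padic.norm_int_le_one (p := p) (k:ℤ)
            have := zpow_pos (q_pos (p := p)) n
            nlinarith
        _ = (p:ℝ)^n := one_mul _
    calc ‖x‖ = ‖(x - (k:ℚ_[p]) * (p:ℚ_[p])^(-n)) + (k:ℚ_[p]) * (p:ℚ_[p])^(-n)‖ := by ring_nf
      _ ≤ max ‖x - (k:ℚ_[p]) * (p:ℚ_[p])^(-n)‖ ‖(k:ℚ_[p]) * (p:ℚ_[p])^(-n)‖ :=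
          Padic.nonarchimedean _ _
      _ ≤ (p:ℝ)^n := by
          apply max_le _ h1
          exact hk.trans (zpow_le_zpow_right₀ one_lt_q.le (by omega))


lemma B_disj (n : ℤ) : (↑(Finset.range p) : Set ℕ).PairwiseDisjoint
    (fun k => {x : ℚ_[p] | ‖x - (k:ℚ_[p]) * (p:ℚ_[p])^(-n)‖ ≤ (p:ℝ)^(n-1)}) := by
  intro k hk j hj hkj
  simp only [Finset.coe_range, mem_Iio] at hk hj
  rw [Function.onFun, Set.disjoint_left]
  rintro x hx1 hx2
  simp only [mem_setOf_eq] at hx1 hx2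
  have hnorm : ‖((k:ℚ_[p]) - j) * (p:ℚ_[p])^(-n)‖ ≤ (p:ℝ)^(n-1) := by
    have : ((k:ℚ_[p]) - j) * (p:ℚ_[p])^(-n)
        = (x - (j:ℚ_[p]) * (p:ℚ_[p])^(-n)) - (x - (k:ℚ_[p]) * (p:ℚ_[p])^(-n)) := by ring
    rw [this, sub_eq_add_neg]
    refine le_trans (Padic.nonarchimedean _ _) ?_
    rw [norm_neg]
    exact max_le hx2 hx1
  have h1 : ‖((k:ℚ_[p]) - j)‖ = 1 := by
    have hcast : ((k:ℚ_[p]) - j) = (((k:ℤ) - j : ℤ) : ℚ_[p]) := by push_cast; ring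
    rw [hcast]
    have hle := Padic.norm_int_le_one (p := p) ((k:ℤ) - j)
    rcases lt_or_eq_of_le hle with h | h
    · exfalso
      rw [Padic.norm_intCast_lt_one_iff] at h
      have hne : (k:ℤ) - j ≠ 0 := by
        intro h0
        exact hkj (Nat.cast_inj.mp (sub_eq_zero.1 h0))
      have hdle : (p:ℤ) ≤ |(k:ℤ) - j| := Int.le_of_dvd (abs_pos.2 hne) ((dvd_abs _ _).mpr h)
      have h2 : |(k:ℤ) - j| < p := abs_lt.2 ⟨by omega, by omega⟩
      linarith
    · exact h
  rw [norm_mul, h1, one_mul, Padic.norm_p_zpow, neg_neg] at hnorm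
  have := zpow_lt_zpow_right₀ (one_lt_q (p := p)) (show n - 1 < n by omega)
  linarith

variable [MeasurableSpace ℚ_[p]] [BorelSpace ℚ_[p]]
  (μ : Measure ℚ_[p]) [μ.IsAddHaarMeasure]

lemma meas_translate (c : ℚ_[p]) (S : Set ℚ_[p]) : μ {x | x - c ∈ S} = μ S := by
  have h : {x : ℚ_[p] | x - c ∈ S} = (fun x => -c + x) ⁻¹' S := by
    ext x; simp [sub_eq_neg_add]
  rw [h, measure_preimage_add]

lemma meas_B_succ (n : ℤ) : μ (B p n) = p * μ (B p (n-1)) := by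
  rw [B_cover]
  rw [measure_biUnion_finset (B_disj n) (fun k _ => by
    exact (isClosed_le (by fun_prop) continuous_const).measurableSet)]
  have hterm : ∀ k ∈ Finset.range p,
      μ {x : ℚ_[p] | ‖x - (k:ℚ_[p]) * (p:ℚ_[p])^(-n)‖ ≤ (p:ℝ)^(n-1)} = μ (B p (n-1)) := by
    intro k _
    exact meas_translate μ ((k:ℚ_[p]) * (p:ℚ_[p])^(-n)) (B p (n-1))
  rw [Finset.sum_congr rfl hterm, Finset.sum_const, Finset.card_range, nsmul_eq_mul]

lemma meas_B_lt_top (n : ℤ) : μ (B p n) < ⊤ := by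
  rw [B_eq_closedBall]
  exact (isCompact_closedBall _ _).measure_lt_top

lemma meas_B (hμ : μ {x : ℚ_[p] | ‖x‖ ≤ 1} = 1) (n : ℤ) :
    μ (B p n) = ENNReal.ofReal ((p:ℝ)^n) := by
  have hB0 : μ (B p 0) = 1 := by
    have : B p 0 = {x : ℚ_[p] | ‖x‖ ≤ 1} := by ext x; simp [B]
    rw [this, hμ]
  have hpE : ((p:ℝ≥0∞)) = ENNReal.ofReal (p:ℝ) := by
    simp [ENNReal.ofReal_natCast]
  induction n using Int.induction_on with
  | zero => simp [hB0]
  | succ k ih =>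
      have := meas_B_succ μ (k+1)
      simp only [add_sub_cancel_right] at this
      rw [this, ih, hpE, ← ENNReal.ofReal_mul (q_pos (p := p)).le]
      congr 1
      rw [zpow_add_one₀ (ne_of_gt (q_pos (p := p))), mul_comm]
  | pred k ih =>
      have h := meas_B_succ μ (-k)
      rw [ih] at h
      have : μ (B p (-k - 1)) = ENNReal.ofReal ((p:ℝ)^(-k:ℤ)) / p := by
        rw [ENNReal.eq_div_iff (by exact_mod_cast hp.out.ne_zero) (by simp)]
        exact h.symm
      rw [show (-(k:ℤ) - 1) = (-k - 1 : ℤ) by ring] at this ⊢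
      rw [this, hpE, ← ENNReal.ofReal_div_of_pos (q_pos (p := p)),
        zpow_sub_one₀ (ne_of_gt (q_pos (p := p))), div_eq_mul_inv]


lemma meas_B_ne_top (n : ℤ) : μ (B p n) ≠ ⊤ := (meas_B_lt_top μ n).ne

/-- sphere of radius p^n -/
def Sh (p : ℕ) [Fact p.Prime] (n : ℤ) : Set ℚ_[p] := {x | ‖x‖ = (p:ℝ)^n}

lemma Sh_meas (n : ℤ) : MeasurableSet (Sh p n) :=
  (isClosed_eq continuous_norm continuous_const).measurableSet

lemma B_meas (n : ℤ) : MeasurableSet (B p n) := (B_closed n).measurableSet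

lemma B_mono {m n : ℤ} (h : m ≤ n) : B p m ⊆ B p n := fun x hx =>
  le_trans hx (zpow_le_zpow_right₀ (one_lt_q (p := p)).le h)

lemma Sh_eq (n : ℤ) : Sh p n = B p n \ B p (n-1) := by
  ext x
  simp only [Sh, B, mem_setOf_eq, mem_diff]
  constructor
  · intro hx
    refine ⟨le_of_eq hx, ?_⟩
    rw [← Padic.norm_lt_pow_iff_norm_le_pow_sub_one, hx]
    exact lt_irrefl _
  · rintro ⟨h1, h2⟩
    rw [← Padic.norm_lt_pow_iff_norm_le_pow_sub_one] at h2
    exact le_antisymm h1 (not_lt.mp h2)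

lemma meas_Sh (hμ : μ {x : ℚ_[p] | ‖x‖ ≤ 1} = 1) (n : ℤ) :
    μ (Sh p n) = ENNReal.ofReal ((p:ℝ)^n - (p:ℝ)^(n-1)) := by
  rw [Sh_eq, measure_diff (B_mono (by omega)) (B_meas (n-1)).nullMeasurableSet
    (meas_B_ne_top μ (n-1)), meas_B μ hμ, meas_B μ hμ,
    ← ENNReal.ofReal_sub _ (zpow_pos (q_pos (p := p)) (n-1)).le]

lemma exists_shell {x : ℚ_[p]} (hx : x ≠ 0) : ∃ n : ℤ, x ∈ Sh p n :=
  ⟨-x.valuation, Padic.norm_eq_zpow_neg_valuation hx⟩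

lemma norm_one_sub_of_lt {x : ℚ_[p]} (hx : ‖x‖ < 1) : ‖1 - x‖ = 1 := by
  rcases eq_or_ne x 0 with rfl | hne
  · simp
  · have h : ‖(1:ℚ_[p])‖ ≠ ‖-x‖ := by
      rw [norm_neg, norm_one]; exact fun h => absurd h.symm (ne_of_lt hx)
    rw [sub_eq_add_neg, Padic.add_eq_max_of_ne h, norm_neg, norm_one]
    exact max_eq_left hx.le

lemma norm_eq_one_of_sub_lt {x : ℚ_[p]} (hx : ‖x - 1‖ < 1) : ‖x‖ = 1 := by
  have h : ‖x - 1‖ ≠ ‖(1:ℚ_[p])‖ := by rw [norm_one]; exact ne_of_lt hx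
  have : x = (x - 1) + 1 := by ring
  rw [this, Padic.add_eq_max_of_ne h, norm_one]
  exact max_eq_right hx.le

lemma norm_one_sub_of_gt {x : ℚ_[p]} (hx : 1 < ‖x‖) : ‖1 - x‖ = ‖x‖ := by
  have h : ‖(1:ℚ_[p])‖ ≠ ‖-x‖ := by
    rw [norm_neg, norm_one]; exact ne_of_lt hx
  rw [sub_eq_add_neg, Padic.add_eq_max_of_ne h, norm_neg, norm_one]
  exact max_eq_right hx.le


lemma qzpow_inj {m n : ℤ} (h : ((p:ℝ))^m = (p:ℝ)^n) : m = n := by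
  rcases lt_trichotomy m n with hlt | he | hlt
  · have h2 := zpow_lt_zpow_right₀ (one_lt_q (p := p)) hlt
    rw [h] at h2
    exact absurd h2 (lt_irrefl _)
  · exact he
  · have h2 := zpow_lt_zpow_right₀ (one_lt_q (p := p)) hlt
    rw [h] at h2
    exact absurd h2 (lt_irrefl _)

lemma Sh_disj_of_ne {m n : ℤ} (h : m ≠ n) : Disjoint (Sh p m) (Sh p n) := by
  rw [Set.disjoint_left]
  rintro x hxm hxn
  simp only [Sh, mem_setOf_eq] at hxm hxn
  exact h (qzpow_inj (hxm.symm.trans hxn))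

lemma zero_notin_Sh (m : ℤ) : (0:ℚ_[p]) ∉ Sh p m := by
  simp only [Sh, mem_setOf_eq, norm_zero]
  exact fun h => absurd h.symm (ne_of_gt (zpow_pos (q_pos (p := p)) m))

/-- key real computation on a shell -/
lemma rpow_shell (m : ℤ) (s : ℝ) :
    ((p:ℝ)^m)^s * ((p:ℝ)^m - (p:ℝ)^(m-1)) = (1 - 1/(p:ℝ)) * (p:ℝ)^((m:ℝ)*(s+1)) := by
  have hq : (0:ℝ) < p := q_pos
  have h1 : ((p:ℝ)^m : ℝ) = (p:ℝ)^((m:ℝ)) := (Real.rpow_intCast _ m).symm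
  have h2 : ((p:ℝ)^(m-1) : ℝ) = (p:ℝ)^((m:ℝ)-1) := by
    rw [← Real.rpow_intCast (p:ℝ) (m-1)]; push_cast; ring_nf
  have e : ∀ u v : ℝ, (p:ℝ)^u * (p:ℝ)^v = (p:ℝ)^(u+v) := fun u v => (Real.rpow_add hq u v).symm
  rw [h1, h2, ← Real.rpow_mul hq.le, mul_sub, e, e, sub_mul, one_mul, one_div]
  have h4 : ((p:ℝ))⁻¹ * (p:ℝ)^((m:ℝ)*(s+1)) = (p:ℝ)^((m:ℝ)*(s+1) - 1) := by
    rw [Real.rpow_sub hq, Real.rpow_one, div_eq_mul_inv]; ring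
  rw [h4, show (m:ℝ)*s + (m:ℝ) = (m:ℝ)*(s+1) by ring,
    show (m:ℝ)*s + ((m:ℝ)-1) = (m:ℝ)*(s+1) - 1 by ring]


lemma lint_shell_const {g : ℚ_[p] → ℝ≥0∞} {S : Set ℚ_[p]} (hS : MeasurableSet S) {c : ℝ≥0∞}
    (hg : ∀ x ∈ S, g x = c) : ∫⁻ x in S, g x ∂μ = c * μ S := by
  rw [setLIntegral_congr_fun_ae hS (ae_of_all _ hg), setLIntegral_const]

lemma lint_U (hμ : μ {x : ℚ_[p] | ‖x‖ ≤ 1} = 1) (s₁ s₂ : ℝ) (hs₁ : 0 < s₁) (h1 : s₁ < 1) :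
    ∫⁻ x in {x : ℚ_[p] | ‖x‖ < 1}, ENNReal.ofReal (‖x‖ ^ (s₁ - 1) * ‖1 - x‖ ^ (s₂ - 1)) ∂μ
      = ENNReal.ofReal ((1 - 1/(p:ℝ)) * ((p:ℝ)^(-s₁) / (1 - (p:ℝ)^(-s₁)))) := by
  have hq1 := one_lt_q (p := p); have hq0 := q_pos (p := p)
  set a : ℝ := (p:ℝ)^(-s₁) with ha
  have ha0 : 0 < a := Real.rpow_pos_of_pos hq0 _
  have ha1 : a < 1 := Real.rpow_lt_one_of_one_lt_of_neg hq1 (by linarith)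
  have hU : {x : ℚ_[p] | ‖x‖ < 1} = {(0:ℚ_[p])} ∪ ⋃ n : ℕ, Sh p (-(n+1)) := by
    ext x
    simp only [mem_setOf_eq, mem_union, mem_singleton_iff, mem_iUnion]
    constructor
    · intro hx
      rcases eq_or_ne x 0 with rfl | hne
      · exact Or.inl rfl
      · obtain ⟨m, hm⟩ := exists_shell hne
        have hxm : ‖x‖ = (p:ℝ)^m := hm
        have hm0 : m < 0 := by
          by_contra hc
          have := zpow_le_zpow_right₀ hq1.le (not_lt.mp hc)
          rw [zpow_zero] at this
          rw [hxm] at hx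
          linarith
        refine Or.inr ⟨(-m-1).toNat, ?_⟩
        have htn : ((-m-1).toNat : ℤ) = -m-1 := Int.toNat_of_nonneg (by omega)
        have he : -(((-m-1).toNat : ℕ) + 1 : ℤ) = m := by omega
        rw [he]; exact hm
    · rintro (rfl | ⟨n, hn⟩)
      · simp
      · have hxn : ‖x‖ = (p:ℝ)^(-(n+1):ℤ) := hn
        rw [hxn]
        have := zpow_lt_zpow_right₀ hq1 (show (-(n+1):ℤ) < 0 by omega)
        rwa [zpow_zero] at this
  rw [hU, lintegral_union (MeasurableSet.iUnion fun n => Sh_meas _)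
    (by
      rw [Set.disjoint_left]
      rintro x rfl hx
      simp only [mem_iUnion] at hx
      obtain ⟨n, hn⟩ := hx
      exact zero_notin_Sh _ hn),
    lintegral_iUnion (fun n => Sh_meas _)
    (fun i j hij => Sh_disj_of_ne (by omega))]
  have h0 : ∫⁻ x in {(0:ℚ_[p])}, ENNReal.ofReal (‖x‖ ^ (s₁ - 1) * ‖1 - x‖ ^ (s₂ - 1)) ∂μ = 0 := by
    rw [lintegral_singleton]
    rw [norm_zero, Real.zero_rpow (by intro h; rw [sub_eq_zero] at h; linarith), zero_mul]
    simp
  rw [h0, zero_add]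
  have hterm : ∀ n : ℕ,
      ∫⁻ x in Sh p (-(n+1)), ENNReal.ofReal (‖x‖ ^ (s₁ - 1) * ‖1 - x‖ ^ (s₂ - 1)) ∂μ
        = ENNReal.ofReal ((1 - 1/(p:ℝ)) * (a^n * a)) := by
    intro n
    have hc : ∀ x ∈ Sh p (-(n+1):ℤ),
        ENNReal.ofReal (‖x‖ ^ (s₁ - 1) * ‖1 - x‖ ^ (s₂ - 1))
          = ENNReal.ofReal (((p:ℝ)^(-(n+1):ℤ)) ^ (s₁ - 1)) := by
      intro x hx
      have hxn : ‖x‖ = (p:ℝ)^(-(n+1):ℤ) := hx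
      have hlt : ‖x‖ < 1 := by
        rw [hxn]
        have := zpow_lt_zpow_right₀ hq1 (show (-(n+1):ℤ) < 0 by omega)
        rwa [zpow_zero] at this
      rw [norm_one_sub_of_lt hlt, Real.one_rpow, mul_one, hxn]
    rw [lint_shell_const μ (Sh_meas _) hc, meas_Sh μ hμ,
      ← ENNReal.ofReal_mul (Real.rpow_nonneg (zpow_pos hq0 _).le _), rpow_shell]
    congr 1
    have hexp : ((-(n+1):ℤ):ℝ) * ((s₁-1)+1) = (-s₁) * ((n+1:ℕ):ℝ) := by push_cast; ring
    rw [hexp, Real.rpow_mul hq0.le, Real.rpow_natCast, ← ha, pow_succ]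
  simp only [hterm]
  rw [← ENNReal.ofReal_tsum_of_nonneg
    (fun n => mul_nonneg (by rw [sub_nonneg, div_le_one hq0]; linarith) (by positivity))
    (((summable_geometric_of_lt_one ha0.le ha1).mul_right a).mul_left _)]
  congr 1
  rw [tsum_mul_left, tsum_mul_right, tsum_geometric_of_lt_one ha0.le ha1]
  have : (1-a) ≠ 0 := by intro h; rw [sub_eq_zero] at h; linarith
  field_simp


lemma SSh_meas (n : ℤ) : MeasurableSet {x : ℚ_[p] | ‖x - 1‖ = (p:ℝ)^n} :=
  (isClosed_eq (by fun_prop) continuous_const).measurableSet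

lemma meas_SSh (hμ : μ {x : ℚ_[p] | ‖x‖ ≤ 1} = 1) (n : ℤ) :
    μ {x : ℚ_[p] | ‖x - 1‖ = (p:ℝ)^n} = ENNReal.ofReal ((p:ℝ)^n - (p:ℝ)^(n-1)) := by
  have h : {x : ℚ_[p] | ‖x - 1‖ = (p:ℝ)^n} = {x : ℚ_[p] | x - 1 ∈ Sh p n} := rfl
  rw [h, meas_translate μ 1 (Sh p n), meas_Sh μ hμ]

lemma lint_V (hμ : μ {x : ℚ_[p] | ‖x‖ ≤ 1} = 1) (s₁ s₂ : ℝ) (hs₂ : 0 < s₂) (h1 : s₂ < 1) :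
    ∫⁻ x in {x : ℚ_[p] | ‖x - 1‖ < 1}, ENNReal.ofReal (‖x‖ ^ (s₁ - 1) * ‖1 - x‖ ^ (s₂ - 1)) ∂μ
      = ENNReal.ofReal ((1 - 1/(p:ℝ)) * ((p:ℝ)^(-s₂) / (1 - (p:ℝ)^(-s₂)))) := by
  have hq1 := one_lt_q (p := p); have hq0 := q_pos (p := p)
  set b : ℝ := (p:ℝ)^(-s₂) with hb
  have hb0 : 0 < b := Real.rpow_pos_of_pos hq0 _
  have hb1 : b < 1 := Real.rpow_lt_one_of_one_lt_of_neg hq1 (by linarith)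
  have hV : {x : ℚ_[p] | ‖x - 1‖ < 1}
      = {(1:ℚ_[p])} ∪ ⋃ n : ℕ, {x : ℚ_[p] | ‖x - 1‖ = (p:ℝ)^(-(n+1):ℤ)} := by
    ext x
    simp only [mem_setOf_eq, mem_union, mem_singleton_iff, mem_iUnion]
    constructor
    · intro hx
      rcases eq_or_ne x 1 with rfl | hne
      · exact Or.inl rfl
      · obtain ⟨m, hm⟩ := exists_shell (sub_ne_zero.2 hne)
        have hxm : ‖x - 1‖ = (p:ℝ)^m := hm
        have hm0 : m < 0 := by
          by_contra hc
          have := zpow_le_zpow_right₀ hq1.le (not_lt.mp hc)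
          rw [zpow_zero] at this
          rw [hxm] at hx
          linarith
        refine Or.inr ⟨(-m-1).toNat, ?_⟩
        have htn : ((-m-1).toNat : ℤ) = -m-1 := Int.toNat_of_nonneg (by omega)
        have he : -(((-m-1).toNat : ℕ) + 1 : ℤ) = m := by omega
        rw [he]; exact hxm
    · rintro (rfl | ⟨n, hn⟩)
      · simp
      · have hxn : ‖x - 1‖ = (p:ℝ)^(-(n+1):ℤ) := hn
        rw [hxn]
        have := zpow_lt_zpow_right₀ hq1 (show (-(n+1):ℤ) < 0 by omega)
        rwa [zpow_zero] at this
  rw [hV, lintegral_union (MeasurableSet.iUnion fun n => SSh_meas _)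
    (by
      rw [Set.disjoint_left]
      rintro x rfl hx
      simp only [mem_iUnion, mem_setOf_eq, sub_self, norm_zero] at hx
      obtain ⟨n, hn⟩ := hx
      exact absurd hn.symm (ne_of_gt (zpow_pos hq0 _))),
    lintegral_iUnion (fun n => SSh_meas _)
    (by
      intro i j hij
      rw [Function.onFun, Set.disjoint_left]
      rintro x hxi hxj
      simp only [mem_setOf_eq] at hxi hxj
      have : (-(i+1):ℤ) = (-(j+1):ℤ) := qzpow_inj (hxi.symm.trans hxj)
      omega)]
  have h0 : ∫⁻ x in {(1:ℚ_[p])}, ENNReal.ofReal (‖x‖ ^ (s₁ - 1) * ‖1 - x‖ ^ (s₂ - 1)) ∂μ = 0 := by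
    rw [lintegral_singleton]
    rw [sub_self, norm_zero, Real.zero_rpow (by intro h; rw [sub_eq_zero] at h; linarith), mul_zero]
    simp
  rw [h0, zero_add]
  have hterm : ∀ n : ℕ,
      ∫⁻ x in {x : ℚ_[p] | ‖x - 1‖ = (p:ℝ)^(-(n+1):ℤ)},
          ENNReal.ofReal (‖x‖ ^ (s₁ - 1) * ‖1 - x‖ ^ (s₂ - 1)) ∂μ
        = ENNReal.ofReal ((1 - 1/(p:ℝ)) * (b^n * b)) := by
    intro n
    have hc : ∀ x ∈ {x : ℚ_[p] | ‖x - 1‖ = (p:ℝ)^(-(n+1):ℤ)},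
        ENNReal.ofReal (‖x‖ ^ (s₁ - 1) * ‖1 - x‖ ^ (s₂ - 1))
          = ENNReal.ofReal (((p:ℝ)^(-(n+1):ℤ)) ^ (s₂ - 1)) := by
      intro x hx
      have hxn : ‖x - 1‖ = (p:ℝ)^(-(n+1):ℤ) := hx
      have hlt : ‖x - 1‖ < 1 := by
        rw [hxn]
        have := zpow_lt_zpow_right₀ hq1 (show (-(n+1):ℤ) < 0 by omega)
        rwa [zpow_zero] at this
      rw [norm_eq_one_of_sub_lt hlt, Real.one_rpow, one_mul, norm_sub_rev, hxn]
    rw [lint_shell_const μ (SSh_meas _) hc, meas_SSh μ hμ,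
      ← ENNReal.ofReal_mul (Real.rpow_nonneg (zpow_pos hq0 _).le _), rpow_shell]
    congr 1
    have hexp : ((-(n+1):ℤ):ℝ) * ((s₂-1)+1) = (-s₂) * ((n+1:ℕ):ℝ) := by push_cast; ring
    rw [hexp, Real.rpow_mul hq0.le, Real.rpow_natCast, ← hb, pow_succ]
  simp only [hterm]
  rw [← ENNReal.ofReal_tsum_of_nonneg
    (fun n => mul_nonneg (by rw [sub_nonneg, div_le_one hq0]; linarith) (by positivity))
    (((summable_geometric_of_lt_one hb0.le hb1).mul_right b).mul_left _)]
  congr 1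
  rw [tsum_mul_left, tsum_mul_right, tsum_geometric_of_lt_one hb0.le hb1]
  have : (1-b) ≠ 0 := by intro h; rw [sub_eq_zero] at h; linarith
  field_simp

lemma lint_D (hμ : μ {x : ℚ_[p] | ‖x‖ ≤ 1} = 1) (s₁ s₂ : ℝ) (hsum : s₁ + s₂ < 1)
    (hs₁ : 0 < s₁) (hs₂ : 0 < s₂) :
    ∫⁻ x in {x : ℚ_[p] | 1 < ‖x‖}, ENNReal.ofReal (‖x‖ ^ (s₁ - 1) * ‖1 - x‖ ^ (s₂ - 1)) ∂μ
      = ENNReal.ofReal ((1 - 1/(p:ℝ)) * ((p:ℝ)^(s₁+s₂-1) / (1 - (p:ℝ)^(s₁+s₂-1)))) := by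
  have hq1 := one_lt_q (p := p); have hq0 := q_pos (p := p)
  set c : ℝ := (p:ℝ)^(s₁+s₂-1) with hc
  have hc0 : 0 < c := Real.rpow_pos_of_pos hq0 _
  have hc1 : c < 1 := Real.rpow_lt_one_of_one_lt_of_neg hq1 (by linarith)
  have hD : {x : ℚ_[p] | 1 < ‖x‖} = ⋃ n : ℕ, Sh p (n+1) := by
    ext x
    simp only [mem_setOf_eq, mem_iUnion]
    constructor
    · intro hx
      have hne : x ≠ 0 := by intro h; rw [h, norm_zero] at hx; linarith
      obtain ⟨m, hm⟩ := exists_shell hne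
      have hxm : ‖x‖ = (p:ℝ)^m := hm
      have hm0 : 0 < m := by
        by_contra hcon
        have := zpow_le_zpow_right₀ hq1.le (not_lt.mp hcon)
        rw [zpow_zero] at this
        rw [hxm] at hx
        linarith
      refine ⟨(m-1).toNat, ?_⟩
      have htn : ((m-1).toNat : ℤ) = m-1 := Int.toNat_of_nonneg (by omega)
      have he : (((m-1).toNat : ℕ) + 1 : ℤ) = m := by omega
      rw [he]; exact hm
    · rintro ⟨n, hn⟩
      have hxn : ‖x‖ = (p:ℝ)^((n+1):ℤ) := hn
      rw [hxn]
      have := zpow_lt_zpow_right₀ hq1 (show (0:ℤ) < (n+1:ℤ) by omega)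
      rwa [zpow_zero] at this
  rw [hD, lintegral_iUnion (fun n => Sh_meas _)
    (fun i j hij => Sh_disj_of_ne (by omega))]
  have hterm : ∀ n : ℕ,
      ∫⁻ x in Sh p (n+1), ENNReal.ofReal (‖x‖ ^ (s₁ - 1) * ‖1 - x‖ ^ (s₂ - 1)) ∂μ
        = ENNReal.ofReal ((1 - 1/(p:ℝ)) * (c^n * c)) := by
    intro n
    have hcc : ∀ x ∈ Sh p ((n+1):ℤ),
        ENNReal.ofReal (‖x‖ ^ (s₁ - 1) * ‖1 - x‖ ^ (s₂ - 1))
          = ENNReal.ofReal (((p:ℝ)^((n+1):ℤ)) ^ ((s₁+s₂-2))) := by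
      intro x hx
      have hxn : ‖x‖ = (p:ℝ)^((n+1):ℤ) := hx
      have hgt : 1 < ‖x‖ := by
        rw [hxn]
        have := zpow_lt_zpow_right₀ hq1 (show (0:ℤ) < (n+1:ℤ) by omega)
        rwa [zpow_zero] at this
      rw [norm_one_sub_of_gt hgt, hxn, ← Real.rpow_add (zpow_pos hq0 _)]
      congr 1
      ring
    rw [lint_shell_const μ (Sh_meas _) hcc, meas_Sh μ hμ,
      ← ENNReal.ofReal_mul (Real.rpow_nonneg (zpow_pos hq0 _).le _), rpow_shell]
    congr 1
    have hexp : (((n+1):ℤ):ℝ) * ((s₁+s₂-2)+1) = (s₁+s₂-1) * ((n+1:ℕ):ℝ) := by push_cast; ring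
    rw [hexp, Real.rpow_mul hq0.le, Real.rpow_natCast, ← hc, pow_succ]
  simp only [hterm]
  rw [← ENNReal.ofReal_tsum_of_nonneg
    (fun n => mul_nonneg (by rw [sub_nonneg, div_le_one hq0]; linarith) (by positivity))
    (((summable_geometric_of_lt_one hc0.le hc1).mul_right c).mul_left _)]
  congr 1
  rw [tsum_mul_left, tsum_mul_right, tsum_geometric_of_lt_one hc0.le hc1]
  have : (1-c) ≠ 0 := by intro h; rw [sub_eq_zero] at h; linarith
  field_simp

lemma meas_C (hμ : μ {x : ℚ_[p] | ‖x‖ ≤ 1} = 1) :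
    μ {x : ℚ_[p] | ‖x‖ = 1 ∧ ‖x - 1‖ = 1} = ENNReal.ofReal (1 - 2/(p:ℝ)) := by
  have hq1 := one_lt_q (p := p); have hq0 := q_pos (p := p)
  have hp2 : (2:ℝ) ≤ p := by exact_mod_cast hp.out.two_le
  have hCmeas : MeasurableSet {x : ℚ_[p] | ‖x‖ = 1 ∧ ‖x - 1‖ = 1} := by
    rw [Set.setOf_and]
    exact ((isClosed_eq continuous_norm continuous_const).measurableSet).inter
      ((isClosed_eq (by fun_prop) continuous_const).measurableSet)
  have hVm : μ {x : ℚ_[p] | ‖x - 1‖ < 1} = ENNReal.ofReal ((p:ℝ)⁻¹) := by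
    have h : {x : ℚ_[p] | ‖x - 1‖ < 1} = {x : ℚ_[p] | x - 1 ∈ B p (-1)} := by
      ext x
      simp only [mem_setOf_eq, B]
      rw [show ((p:ℝ)^(-1:ℤ)) = (p:ℝ)^((0:ℤ)-1) by norm_num,
        ← Padic.norm_lt_pow_iff_norm_le_pow_sub_one, zpow_zero]
    rw [h, meas_translate μ 1 (B p (-1)), meas_B μ hμ, zpow_neg_one]
  have hsplit : Sh p 0 = {x : ℚ_[p] | ‖x - 1‖ < 1} ∪ {x : ℚ_[p] | ‖x‖ = 1 ∧ ‖x - 1‖ = 1} := by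
    ext x
    simp only [Sh, mem_setOf_eq, mem_union, zpow_zero]
    constructor
    · intro hx
      have hle : ‖x - 1‖ ≤ 1 := by
        rw [sub_eq_add_neg]
        refine le_trans (Padic.nonarchimedean _ _) ?_
        rw [norm_neg, norm_one, hx]
        simp
      rcases lt_or_eq_of_le hle with h | h
      · exact Or.inl h
      · exact Or.inr ⟨hx, h⟩
    · rintro (h | ⟨h1, _⟩)
      · exact norm_eq_one_of_sub_lt h
      · exact h1
  have hdisj : Disjoint {x : ℚ_[p] | ‖x - 1‖ < 1} {x : ℚ_[p] | ‖x‖ = 1 ∧ ‖x - 1‖ = 1} := by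
    rw [Set.disjoint_left]
    rintro x hx1 ⟨_, hx2⟩
    simp only [mem_setOf_eq] at hx1
    rw [hx2] at hx1
    exact lt_irrefl _ hx1
  have hadd := measure_union (μ := μ) hdisj hCmeas
  rw [← hsplit, meas_Sh μ hμ, hVm] at hadd
  have hcancel : ENNReal.ofReal ((p:ℝ)⁻¹) ≠ ⊤ := ENNReal.ofReal_ne_top
  have : ENNReal.ofReal ((p:ℝ)⁻¹) + μ {x : ℚ_[p] | ‖x‖ = 1 ∧ ‖x - 1‖ = 1}
      = ENNReal.ofReal ((p:ℝ)⁻¹) + ENNReal.ofReal (1 - 2/(p:ℝ)) := by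
    rw [← hadd, ← ENNReal.ofReal_add (by positivity) (by
      rw [sub_nonneg, div_le_one hq0]; linarith)]
    congr 1
    rw [zpow_zero, show ((0:ℤ)-1) = (-1:ℤ) by norm_num, zpow_neg_one]
    field_simp
    ring
  exact (ENNReal.add_right_inj hcancel).mp this

end PadicBetaAux

open PadicBetaAux

/-- **The `p`-adic Beta function identity.**
For an additive Haar measure `μ` on `ℚ_p` normalized by `μ(ℤ_p) = 1` and real
`s₁, s₂ > 0` with `s₁ + s₂ < 1`, the Beta integral satisfies
`∫_{ℚ_p} ‖x‖^{s₁−1} ‖1−x‖^{s₂−1} dμ = Γ_p(s₁)Γ_p(s₂)/Γ_p(s₁+s₂)`. -/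
theorem padic_beta_integral (p : ℕ) [Fact p.Prime]
    [MeasurableSpace ℚ_[p]] [BorelSpace ℚ_[p]]
    (μ : Measure ℚ_[p]) [μ.IsAddHaarMeasure]
    (hμ : μ {x : ℚ_[p] | ‖x‖ ≤ 1} = 1)
    (s₁ s₂ : ℝ) (hs₁ : 0 < s₁) (hs₂ : 0 < s₂) (hsum : s₁ + s₂ < 1) :
    ∫ x : ℚ_[p], ‖x‖ ^ (s₁ - 1) * ‖1 - x‖ ^ (s₂ - 1) ∂μ
      = padicGamma p s₁ * padicGamma p s₂ / padicGamma p (s₁ + s₂) := by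
  have hq1 := one_lt_q (p := p); have hq0 := q_pos (p := p)
  have hp2 : (2:ℝ) ≤ p := by exact_mod_cast (Fact.out : p.Prime).two_le
  set a : ℝ := (p:ℝ)^(-s₁) with ha
  set b : ℝ := (p:ℝ)^(-s₂) with hb
  set c : ℝ := (p:ℝ)^(s₁+s₂-1) with hc
  have ha0 : 0 < a := Real.rpow_pos_of_pos hq0 _
  have ha1 : a < 1 := Real.rpow_lt_one_of_one_lt_of_neg hq1 (by linarith)
  have hb0 : 0 < b := Real.rpow_pos_of_pos hq0 _
  have hb1 : b < 1 := Real.rpow_lt_one_of_one_lt_of_neg hq1 (by linarith)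
  have hc0 : 0 < c := Real.rpow_pos_of_pos hq0 _
  have hc1 : c < 1 := Real.rpow_lt_one_of_one_lt_of_neg hq1 (by linarith)
  have habc : a*b*c = 1/(p:ℝ) := by
    rw [ha, hb, hc, ← Real.rpow_add hq0, ← Real.rpow_add hq0,
      show -s₁ + -s₂ + (s₁+s₂-1) = (-1:ℝ) by ring, Real.rpow_neg_one, one_div]
  have hfm : Measurable (fun x : ℚ_[p] => ‖x‖ ^ (s₁-1) * ‖1-x‖ ^ (s₂-1)) :=
    (measurable_norm.pow_const (s₁-1)).mul
      (((measurable_const.sub measurable_id).norm).pow_const (s₂-1))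
  have hfnn : ∀ x : ℚ_[p], 0 ≤ ‖x‖ ^ (s₁-1) * ‖1-x‖ ^ (s₂-1) := fun x =>
    mul_nonneg (Real.rpow_nonneg (norm_nonneg _) _) (Real.rpow_nonneg (norm_nonneg _) _)
  rw [MeasureTheory.integral_eq_lintegral_of_nonneg_ae (ae_of_all _ hfnn)
    hfm.aestronglyMeasurable]
  -- partition of the whole space
  have huniv : (Set.univ : Set ℚ_[p]) = {x : ℚ_[p] | ‖x‖ < 1}
      ∪ ({x : ℚ_[p] | ‖x - 1‖ < 1}
      ∪ ({x : ℚ_[p] | ‖x‖ = 1 ∧ ‖x - 1‖ = 1} ∪ {x : ℚ_[p] | 1 < ‖x‖})) := by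
    ext x
    simp only [Set.mem_univ, true_iff, Set.mem_union, Set.mem_setOf_eq]
    rcases lt_trichotomy ‖x‖ 1 with h | h | h
    · exact Or.inl h
    · right
      have hle : ‖x - 1‖ ≤ 1 := by
        rw [sub_eq_add_neg]
        refine le_trans (Padic.nonarchimedean _ _) ?_
        rw [norm_neg, norm_one, h]
        simp
      rcases lt_or_eq_of_le hle with h2 | h2
      · exact Or.inl h2
      · exact Or.inr (Or.inl ⟨h, h2⟩)
    · exact Or.inr (Or.inr (Or.inr h))
  have mU : MeasurableSet {x : ℚ_[p] | ‖x‖ < 1} :=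
    (isOpen_lt continuous_norm continuous_const).measurableSet
  have mV : MeasurableSet {x : ℚ_[p] | ‖x - 1‖ < 1} :=
    (isOpen_lt (by fun_prop) continuous_const).measurableSet
  have mC : MeasurableSet {x : ℚ_[p] | ‖x‖ = 1 ∧ ‖x - 1‖ = 1} := by
    rw [Set.setOf_and]
    exact ((isClosed_eq continuous_norm continuous_const).measurableSet).inter
      ((isClosed_eq (by fun_prop) continuous_const).measurableSet)
  have mD : MeasurableSet {x : ℚ_[p] | 1 < ‖x‖} :=
    (isOpen_lt continuous_const continuous_norm).measurableSet
  have dVC : Disjoint {x : ℚ_[p] | ‖x - 1‖ < 1} {x : ℚ_[p] | ‖x‖ = 1 ∧ ‖x - 1‖ = 1} := by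
    rw [Set.disjoint_left]
    rintro x hx ⟨_, h2⟩
    simp only [Set.mem_setOf_eq] at hx
    rw [h2] at hx
    exact lt_irrefl _ hx
  have dVD : Disjoint {x : ℚ_[p] | ‖x - 1‖ < 1} {x : ℚ_[p] | 1 < ‖x‖} := by
    rw [Set.disjoint_left]
    intro x hx h2
    simp only [Set.mem_setOf_eq] at hx h2
    have := norm_eq_one_of_sub_lt hx
    linarith
  have dCD : Disjoint {x : ℚ_[p] | ‖x‖ = 1 ∧ ‖x - 1‖ = 1} {x : ℚ_[p] | 1 < ‖x‖} := by
    rw [Set.disjoint_left]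
    rintro x ⟨h1, _⟩ h2
    simp only [Set.mem_setOf_eq] at h2
    linarith
  have dU : Disjoint {x : ℚ_[p] | ‖x‖ < 1}
      ({x : ℚ_[p] | ‖x - 1‖ < 1}
        ∪ ({x : ℚ_[p] | ‖x‖ = 1 ∧ ‖x - 1‖ = 1} ∪ {x : ℚ_[p] | 1 < ‖x‖})) := by
    rw [Set.disjoint_union_right, Set.disjoint_union_right]
    refine ⟨?_, ?_, ?_⟩
    · rw [Set.disjoint_left]
      intro x hx h2
      simp only [Set.mem_setOf_eq] at hx h2
      have := norm_eq_one_of_sub_lt h2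
      linarith
    · rw [Set.disjoint_left]
      rintro x hx ⟨h1, _⟩
      simp only [Set.mem_setOf_eq] at hx
      linarith
    · rw [Set.disjoint_left]
      intro x hx h2
      simp only [Set.mem_setOf_eq] at hx h2
      linarith
  have dV : Disjoint {x : ℚ_[p] | ‖x - 1‖ < 1}
      ({x : ℚ_[p] | ‖x‖ = 1 ∧ ‖x - 1‖ = 1} ∪ {x : ℚ_[p] | 1 < ‖x‖}) := by
    rw [Set.disjoint_union_right]
    exact ⟨dVC, dVD⟩
  have hCint : ∫⁻ x in {x : ℚ_[p] | ‖x‖ = 1 ∧ ‖x - 1‖ = 1},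
      ENNReal.ofReal (‖x‖ ^ (s₁ - 1) * ‖1 - x‖ ^ (s₂ - 1)) ∂μ
        = ENNReal.ofReal (1 - 2/(p:ℝ)) := by
    have hcf : ∀ x ∈ {x : ℚ_[p] | ‖x‖ = 1 ∧ ‖x - 1‖ = 1},
        ENNReal.ofReal (‖x‖ ^ (s₁ - 1) * ‖1 - x‖ ^ (s₂ - 1)) = ENNReal.ofReal 1 := by
      rintro x ⟨h1, h2⟩
      rw [h1, norm_sub_rev 1 x, h2, Real.one_rpow, Real.one_rpow, mul_one]
    rw [lint_shell_const μ mC hcf, meas_C μ hμ, ENNReal.ofReal_one, one_mul]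
  rw [← MeasureTheory.setLIntegral_univ, huniv,
    MeasureTheory.lintegral_union (mV.union (mC.union mD)) dU,
    MeasureTheory.lintegral_union (mC.union mD) dV,
    MeasureTheory.lintegral_union mD dCD,
    lint_U μ hμ s₁ s₂ hs₁ (by linarith), lint_V μ hμ s₁ s₂ hs₂ (by linarith),
    lint_D μ hμ s₁ s₂ hsum hs₁ hs₂, hCint]
  rw [← ha, ← hb, ← hc]
  have hnn1 : 0 ≤ 1 - 1/(p:ℝ) := by rw [sub_nonneg, div_le_one hq0]; linarith
  have hnn3 : 0 ≤ 1 - 2/(p:ℝ) := by rw [sub_nonneg, div_le_one hq0]; linarith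
  have hda : (0:ℝ) ≤ a/(1-a) := div_nonneg ha0.le (by linarith)
  have hdb : (0:ℝ) ≤ b/(1-b) := div_nonneg hb0.le (by linarith)
  have hdc : (0:ℝ) ≤ c/(1-c) := div_nonneg hc0.le (by linarith)
  rw [← ENNReal.ofReal_add hnn3 (mul_nonneg hnn1 hdc),
    ← ENNReal.ofReal_add (mul_nonneg hnn1 hdb) (add_nonneg hnn3 (mul_nonneg hnn1 hdc)),
    ← ENNReal.ofReal_add (mul_nonneg hnn1 hda)
      (add_nonneg (mul_nonneg hnn1 hdb) (add_nonneg hnn3 (mul_nonneg hnn1 hdc))),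
    ENNReal.toReal_ofReal (add_nonneg (mul_nonneg hnn1 hda)
      (add_nonneg (mul_nonneg hnn1 hdb) (add_nonneg hnn3 (mul_nonneg hnn1 hdc))))]
  -- final algebra
  have e1 : (p:ℝ)^(s₁-1) = c*b := by
    rw [hc, hb, ← Real.rpow_add hq0]
    congr 1
    ring
  have e2 : (p:ℝ)^(s₂-1) = c*a := by
    rw [hc, ha, ← Real.rpow_add hq0]
    congr 1
    ring
  have e3 : (p:ℝ)^(-(s₁+s₂)) = a*b := by
    rw [ha, hb, ← Real.rpow_add hq0]
    congr 1
    ring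
  have e4 : (p:ℝ)^(s₁+s₂-1) = c := hc.symm
  rw [padicGamma, padicGamma, padicGamma, e1, e2, e3, e4, ← ha, ← hb]
  have h1a : (1:ℝ) - a ≠ 0 := by intro h; rw [sub_eq_zero] at h; linarith
  have h1b : (1:ℝ) - b ≠ 0 := by intro h; rw [sub_eq_zero] at h; linarith
  have h1c : (1:ℝ) - c ≠ 0 := by intro h; rw [sub_eq_zero] at h; linarith
  have h1ab : (1:ℝ) - a*b ≠ 0 := by nlinarith
  rw [show (1:ℝ)/(p:ℝ) = a*b*c from habc.symm,
    show (2:ℝ)/(p:ℝ) = 2*(a*b*c) by rw [habc]; ring]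
  field_simp
  ring
end
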